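/- For any line network of length L formed by DMCs Q_1,…,Q_L and any batch size M, batch alphabet 𝒜 and inner block-length N, the batched-code capacity C_L(M,N) = (1/N)·max over recoding transition matrices F,{Φ_ℓ} and input distributions p_X of I(p_X, W_L) is attained by deterministic recoding, i.e., there exist 0–1 (deterministic) transition matrices F and Φ_1,…,Φ_{L−1} achieving the maximum. -/

import Mathlib

open scoped BigOperators

def IsDist {α : Type*} [Fintype α] (p : α → ℝ) : Prop :=
  (∀ x, 0 ≤ p x) ∧ ∑ x, p x = 1

def IsStoch {α β : Type*} [Fintype α] [Fintype β] (W : Matrix α β ℝ) : Prop :=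
  ∀ x, (∀ y, 0 ≤ W x y) ∧ ∑ y, W x y = 1

/-- Mutual information `I(p, W)` (base-2 logarithm) between the input of channel `W`,
distributed according to `p`, and the corresponding output. -/
noncomputable def mutualInfo {α β : Type*} [Fintype α] [Fintype β]
    (p : α → ℝ) (W : Matrix α β ℝ) : ℝ :=
  ∑ x, ∑ y, p x * W x y * Real.logb 2 (W x y / ∑ x', p x' * W x' y)

/-- `N`-fold memoryless extension `Q^{⊗N}` of a channel. -/
noncomputable def tensorPow {α β : Type*} [Fintype α] [Fintype β] (N : ℕ)
    (Q : Matrix α β ℝ) : Matrix (Fin N → α) (Fin N → β) ℝ :=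
  Matrix.of fun u y => ∏ i, Q (u i) (y i)

/-- `chain Q Φ n = Q 0 * Φ 0 * Q 1 * Φ 1 * ⋯ * Q n`. -/
noncomputable def chain {β γ : Type*} [Fintype β] [Fintype γ]
    (Q : ℕ → Matrix β γ ℝ) (Φ : ℕ → Matrix γ β ℝ) : ℕ → Matrix β γ ℝ
  | 0 => Q 0
  | (n+1) => chain Q Φ n * Φ n * Q (n+1)

/-- End-to-end transition matrix `W_L = F Q₁^{⊗N} Φ₁ Q₂^{⊗N} ⋯ Φ_{L-1} Q_L^{⊗N}` of a
batched code with batch alphabet `A`, batch size `M`, inner block-length `N`,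
over the line network of length `L` whose `ℓ`-th link is the DMC `Q (ℓ-1)` (0-indexed). -/
noncomputable def endToEnd {A Qi Qo : Type*} [Fintype A] [Fintype Qi] [Fintype Qo]
    (L M N : ℕ)
    (F : Matrix (Fin M → A) (Fin N → Qi) ℝ)
    (Q : ℕ → Matrix Qi Qo ℝ)
    (Φ : ℕ → Matrix (Fin N → Qo) (Fin N → Qi) ℝ) :
    Matrix (Fin M → A) (Fin N → Qo) ℝ :=
  F * chain (fun ℓ => tensorPow N (Q ℓ)) Φ (L - 1)

/-- Shannon capacity of a DMC, as the supremum of mutual information over input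
distributions. -/
noncomputable def capacity {α β : Type*} [Fintype α] [Fintype β] (W : Matrix α β ℝ) : ℝ :=
  sSup {I : ℝ | ∃ p : α → ℝ, IsDist p ∧ I = mutualInfo p W}

open scoped BigOperators

lemma gibbs {ι : Type*} (s : Finset ι) (a b : ι → ℝ)
    (ha : ∀ i ∈ s, 0 ≤ a i) (hb : ∀ i ∈ s, 0 ≤ b i)
    (hab : ∀ i ∈ s, b i = 0 → a i = 0) :
    (∑ i ∈ s, a i) * Real.logb 2 ((∑ i ∈ s, a i) / (∑ i ∈ s, b i))
      ≤ ∑ i ∈ s, a i * Real.logb 2 (a i / b i) := by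
  set A := ∑ i ∈ s, a i with hA
  set B := ∑ i ∈ s, b i with hB
  rcases eq_or_lt_of_le (Finset.sum_nonneg ha) with h0 | hApos
  · have hz : ∀ i ∈ s, a i = 0 := (Finset.sum_eq_zero_iff_of_nonneg ha).mp h0.symm
    have hA0 : A = 0 := h0.symm
    rw [hA0, zero_mul]
    exact le_of_eq (Finset.sum_eq_zero fun i hi => by rw [hz i hi, zero_mul]).symm
  · rw [← hA] at hApos
    have hBpos : 0 < B := by
      rcases eq_or_lt_of_le (Finset.sum_nonneg hb) with h0' | h; swap
      · exact h
      · exfalso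
        have hzb := (Finset.sum_eq_zero_iff_of_nonneg hb).mp h0'.symm
        have : A = 0 := Finset.sum_eq_zero fun i hi => hab i hi (hzb i hi)
        linarith
    have key : ∀ i ∈ s, a i * Real.log (b i * A / (B * a i)) ≤ b i * (A / B) - a i := by
      intro i hi
      rcases eq_or_lt_of_le (ha i hi) with h | h
      · rw [← h, zero_mul]
        have : 0 ≤ b i * (A / B) := mul_nonneg (hb i hi) (div_pos hApos hBpos).le
        linarith
      · have hbpos : 0 < b i :=
          lt_of_le_of_ne (hb i hi) (fun e => by have := hab i hi e.symm; linarith)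
        have hx : 0 < b i * A / (B * a i) := div_pos (mul_pos hbpos hApos) (mul_pos hBpos h)
        have hlog := Real.log_le_sub_one_of_pos hx
        have h2 : a i * (b i * A / (B * a i)) = b i * (A / B) := by
          field_simp
        calc a i * Real.log (b i * A / (B * a i))
            ≤ a i * (b i * A / (B * a i) - 1) := by
              exact mul_le_mul_of_nonneg_left hlog h.le
          _ = b i * (A / B) - a i := by rw [mul_sub, h2, mul_one]
    have hsum : ∑ i ∈ s, a i * Real.log (b i * A / (B * a i)) ≤ 0 := by
      calc ∑ i ∈ s, a i * Real.log (b i * A / (B * a i))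
          ≤ ∑ i ∈ s, (b i * (A / B) - a i) := Finset.sum_le_sum key
        _ = B * (A / B) - A := by rw [Finset.sum_sub_distrib, ← Finset.sum_mul]
        _ = 0 := by field_simp; ring
    have expand : ∀ i ∈ s, a i * Real.log (b i * A / (B * a i))
        = a i * Real.log (b i / a i) + a i * Real.log (A / B) := by
      intro i hi
      rcases eq_or_lt_of_le (ha i hi) with h | h
      · rw [← h]; ring
      · have hbpos : 0 < b i :=
          lt_of_le_of_ne (hb i hi) (fun e => by have := hab i hi e.symm; linarith)
        have hrw : b i * A / (B * a i) = (b i / a i) * (A / B) := by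
          field_simp
        rw [hrw, Real.log_mul (div_pos hbpos h).ne' (div_pos hApos hBpos).ne', mul_add]
    have hsum2 : (∑ i ∈ s, a i * Real.log (b i / a i)) + A * Real.log (A / B) ≤ 0 := by
      have h' := hsum
      rw [Finset.sum_congr rfl expand, Finset.sum_add_distrib, ← Finset.sum_mul] at h'
      exact h'
    have neg : ∀ i ∈ s, a i * Real.logb 2 (a i / b i)
        = -(a i * Real.logb 2 (b i / a i)) := by
      intro i hi
      rcases eq_or_lt_of_le (ha i hi) with h | h
      · rw [← h]; ring
      · have hbpos : 0 < b i :=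
          lt_of_le_of_ne (hb i hi) (fun e => by have := hab i hi e.symm; linarith)
        rw [show a i / b i = (b i / a i)⁻¹ by rw [inv_div], Real.logb_inv]
        ring
    have hl2 : (0:ℝ) < Real.log 2 := Real.log_pos one_lt_two
    rw [Finset.sum_congr rfl neg]
    simp only [Real.logb, ← mul_div_assoc]
    simp only [← neg_div]
    rw [← Finset.sum_div]
    rw [Finset.sum_neg_distrib]
    gcongr
    · linarith [hsum2]

lemma mutualInfo_convex {α β ι : Type*} [Fintype α] [Fintype β] [Fintype ι]
    (p : α → ℝ) (hp : ∀ x, 0 ≤ p x)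
    (μ : ι → ℝ) (hμ : ∀ i, 0 ≤ μ i)
    (W : ι → Matrix α β ℝ) (hW : ∀ i x y, 0 ≤ W i x y) :
    mutualInfo p (∑ i, μ i • W i) ≤ ∑ i, μ i * mutualInfo p (W i) := by
  classical
  unfold mutualInfo
  have hR : ∑ i, μ i * ∑ x, ∑ y, p x * W i x y * Real.logb 2 (W i x y / ∑ x', p x' * W i x' y)
      = ∑ x, ∑ y, ∑ i, μ i * (p x * W i x y * Real.logb 2 (W i x y / ∑ x', p x' * W i x' y)) := by
    simp_rw [Finset.mul_sum]
    rw [Finset.sum_comm]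
    exact Finset.sum_congr rfl fun x _ => Finset.sum_comm
  rw [hR]
  refine Finset.sum_le_sum fun x _ => Finset.sum_le_sum fun y _ => ?_
  have happ : ∀ x y, (∑ i, μ i • W i) x y = ∑ i, μ i * W i x y := by
    intro x y; rw [Matrix.sum_apply]; simp [Matrix.smul_apply]
  set a : ι → ℝ := fun i => μ i * (p x * W i x y) with ha_def
  set b : ι → ℝ := fun i => μ i * (p x * ∑ x', p x' * W i x' y) with hb_def
  have hsa : ∑ i, a i = p x * (∑ i, μ i • W i) x y := by
    rw [happ, Finset.mul_sum]
    exact Finset.sum_congr rfl fun i _ => by simp only [ha_def]; ring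
  have hsb : ∑ i, b i = p x * ∑ x', p x' * (∑ i, μ i • W i) x' y := by
    simp only [hb_def, happ, Finset.mul_sum]
    rw [Finset.sum_comm]
    exact Finset.sum_congr rfl fun x' _ => Finset.sum_congr rfl fun i _ => by ring
  -- nonnegativity and support condition
  have hta : ∀ i, 0 ≤ a i := fun i =>
    mul_nonneg (hμ i) (mul_nonneg (hp x) (hW i x y))
  have htb : ∀ i, 0 ≤ b i := fun i =>
    mul_nonneg (hμ i) (mul_nonneg (hp x)
      (Finset.sum_nonneg fun x' _ => mul_nonneg (hp x') (hW i x' y)))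
  have hba : ∀ i, b i = 0 → a i = 0 := by
    intro i hbi
    rcases mul_eq_zero.mp hbi with h | h
    · simp [ha_def, h]
    rcases mul_eq_zero.mp h with h | h
    · simp [ha_def, h]
    · have hterm : p x * W i x y = 0 := by
        have := (Finset.sum_eq_zero_iff_of_nonneg
          (fun x' (_ : x' ∈ Finset.univ) => mul_nonneg (hp x') (hW i x' y))).mp h
        exact this x (Finset.mem_univ x)
      simp [ha_def, hterm]
  have hG := gibbs Finset.univ a b (fun i _ => hta i) (fun i _ => htb i) (fun i _ => hba i)
  -- identify LHS
  have hL : p x * (∑ i, μ i • W i) x y *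
        Real.logb 2 ((∑ i, μ i • W i) x y / ∑ x', p x' * (∑ i, μ i • W i) x' y)
      = (∑ i, a i) * Real.logb 2 ((∑ i, a i) / (∑ i, b i)) := by
    rw [hsa, hsb]
    rcases eq_or_lt_of_le (hp x) with h | h
    · rw [← h]; ring_nf
    · rw [mul_div_mul_left _ _ h.ne']
  -- identify RHS termwise
  have hRt : ∀ i, μ i * (p x * W i x y * Real.logb 2 (W i x y / ∑ x', p x' * W i x' y))
      = a i * Real.logb 2 (a i / b i) := by
    intro i
    rcases eq_or_lt_of_le (hμ i) with hμ0 | hμ0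
    · simp [ha_def, ← hμ0]
    rcases eq_or_lt_of_le (hp x) with hp0 | hp0
    · simp [ha_def, ← hp0]
    · have : a i / b i = W i x y / ∑ x', p x' * W i x' y := by
        simp only [ha_def, hb_def]
        rw [mul_div_mul_left _ _ hμ0.ne', mul_div_mul_left _ _ hp0.ne']
      rw [this]; simp only [ha_def]; ring
  rw [hL, Finset.sum_congr rfl fun i _ => hRt i]
  exact hG

open Classical in
/-- deterministic 0-1 matrix associated to a function -/
noncomputable def det {α β : Type*} [Fintype α] [Fintype β] (f : α → β) : Matrix α β ℝ :=
  Matrix.of fun x y => if y = f x then 1 else 0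

lemma det_stoch {α β : Type*} [Fintype α] [Fintype β] (f : α → β) : IsStoch (det f) := by
  classical
  intro x
  constructor
  · intro y; unfold det; dsimp; split <;> norm_num
  · unfold det; dsimp
    rw [Finset.sum_ite_eq' Finset.univ (f x) (fun _ => (1:ℝ))]
    simp

lemma det_zero_one {α β : Type*} [Fintype α] [Fintype β] (f : α → β) :
    ∀ x y, det f x y = 0 ∨ det f x y = 1 := by
  intro x y; unfold det; dsimp; split
  · right; rfl
  · left; rfl

/-- decomposition of a stochastic matrix as a convex combination of deterministic ones -/
lemma stoch_decomp {α β : Type*} [Fintype α] [Fintype β] [DecidableEq α]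
    (W : Matrix α β ℝ) (hW : IsStoch W) :
    W = ∑ f : α → β, (∏ x, W x (f x)) • det f := by
  classical
  ext x0 y0
  rw [Matrix.sum_apply]
  have key : ∀ x : α, ∑ y : β, (W x y * if x = x0 then (if y = y0 then (1:ℝ) else 0) else 1)
      = if x = x0 then W x0 y0 else 1 := by
    intro x
    by_cases h : x = x0
    · subst h
      have hterm : ∀ y : β, (W x y * if x = x then (if y = y0 then (1:ℝ) else 0) else 1)
          = if y = y0 then W x y else 0 := fun y => by
        rw [if_pos rfl]; split <;> simp
      rw [Finset.sum_congr rfl fun y _ => hterm y,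
        Finset.sum_ite_eq' Finset.univ y0 (fun y => W x y)]
      simp
    · simp only [if_neg h, mul_one]
      exact (hW x).2
  have lhs : W x0 y0 = ∏ x : α, ∑ y : β,
      (W x y * if x = x0 then (if y = y0 then (1:ℝ) else 0) else 1) := by
    rw [Finset.prod_congr rfl (fun x _ => key x)]
    rw [Finset.prod_ite_eq' Finset.univ x0 (fun x => W x0 y0)]
    simp
  rw [lhs, Finset.prod_univ_sum]
  have : Fintype.piFinset (fun _ : α => (Finset.univ : Finset β)) = Finset.univ := by
    ext f; simp [Fintype.mem_piFinset]
  rw [this]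
  apply Finset.sum_congr rfl
  intro f _
  rw [Finset.prod_mul_distrib]
  simp only [Matrix.smul_apply, smul_eq_mul]
  congr 1
  · rw [Finset.prod_ite_eq' Finset.univ x0 (fun x => if f x = y0 then (1:ℝ) else 0)]
    simp only [Finset.mem_univ, if_pos]
    unfold det; dsimp
    by_cases h : f x0 = y0
    · simp [h]
    · simp [h, Ne.symm, fun e : y0 = f x0 => h e.symm]

lemma stoch_weights {α β : Type*} [Fintype α] [Fintype β] [DecidableEq α]
    (W : Matrix α β ℝ) (hW : IsStoch W) :
    (∀ f : α → β, 0 ≤ ∏ x, W x (f x)) ∧ (∑ f : α → β, ∏ x, W x (f x)) = 1 := by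
  classical
  constructor
  · intro f; exact Finset.prod_nonneg fun x _ => (hW x).1 (f x)
  · have : ∀ x : α, ∑ y : β, W x y = 1 := fun x => (hW x).2
    have h1 : (1:ℝ) = ∏ x : α, ∑ y : β, W x y := by
      rw [Finset.prod_congr rfl fun x _ => this x]; simp
    rw [Finset.prod_univ_sum (fun _ => Finset.univ) (fun x y => W x y)] at h1
    have hpi : Fintype.piFinset (fun _ : α => (Finset.univ : Finset β)) = Finset.univ := by
      ext f; simp [Fintype.mem_piFinset]
    rw [hpi] at h1
    exact h1.symm

lemma chain_congr {β γ : Type*} [Fintype β] [Fintype γ]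
    (Q : ℕ → Matrix β γ ℝ) (Φ Ψ : ℕ → Matrix γ β ℝ) :
    ∀ n, (∀ ℓ < n, Φ ℓ = Ψ ℓ) → chain Q Φ n = chain Q Ψ n := by
  intro n
  induction n with
  | zero => intro _; rfl
  | succ n ih =>
    intro h
    show chain Q Φ n * Φ n * Q (n+1) = chain Q Ψ n * Ψ n * Q (n+1)
    rw [ih (fun ℓ hℓ => h ℓ (Nat.lt_succ_of_lt hℓ)), h n (Nat.lt_succ_self n)]

lemma chain_update_sum {β γ ι : Type*} [Fintype β] [Fintype γ] [Fintype ι]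
    (Q : ℕ → Matrix β γ ℝ) (Φ : ℕ → Matrix γ β ℝ) (k : ℕ)
    (c : ι → ℝ) (hc : ∑ i, c i = 1) (D : ι → Matrix γ β ℝ)
    (hk : Φ k = ∑ i, c i • D i) :
    ∀ n, chain Q Φ n = ∑ i, c i • chain Q (Function.update Φ k (D i)) n := by
  classical
  intro n
  induction n with
  | zero =>
    show Q 0 = ∑ i, c i • Q 0
    rw [← Finset.sum_smul, hc, one_smul]
  | succ n ih =>
    show chain Q Φ n * Φ n * Q (n+1) = _
    by_cases hkn : k = n
    · subst hkn
      have hch : ∀ i, chain Q Φ k = chain Q (Function.update Φ k (D i)) k :=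
        fun i => chain_congr Q _ _ k
          (fun ℓ hℓ => (Function.update_of_ne (Nat.ne_of_lt hℓ) _ _).symm)
      rw [hk, Matrix.mul_sum, Matrix.sum_mul]
      apply Finset.sum_congr rfl
      intro i _
      rw [Matrix.mul_smul, Matrix.smul_mul]
      show c i • (chain Q Φ k * D i * Q (k+1)) = c i • (chain Q (Function.update Φ k (D i)) k * Function.update Φ k (D i) k * Q (k+1))
      rw [Function.update_self, ← hch i]
    · rw [ih, Matrix.sum_mul, Matrix.sum_mul]
      apply Finset.sum_congr rfl
      intro i _
      rw [Matrix.smul_mul, Matrix.smul_mul]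
      show c i • (chain Q (Function.update Φ k (D i)) n * Φ n * Q (n+1)) = c i • (chain Q (Function.update Φ k (D i)) n * Function.update Φ k (D i) n * Q (n+1))
      rw [Function.update_of_ne (fun e => hkn e.symm) _ _]

lemma mul_nonneg_mat {α β γ : Type*} [Fintype α] [Fintype β] [Fintype γ]
    (M : Matrix α β ℝ) (P : Matrix β γ ℝ)
    (hM : ∀ x y, 0 ≤ M x y) (hP : ∀ x y, 0 ≤ P x y) :
    ∀ x y, 0 ≤ (M * P) x y := by
  intro x y
  rw [Matrix.mul_apply]
  exact Finset.sum_nonneg fun z _ => mul_nonneg (hM x z) (hP z y)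

lemma tensorPow_nonneg {α β : Type*} [Fintype α] [Fintype β] (N : ℕ)
    (Q : Matrix α β ℝ) (hQ : ∀ x y, 0 ≤ Q x y) :
    ∀ u y, 0 ≤ tensorPow N Q u y := by
  intro u y
  show (0:ℝ) ≤ ∏ i, Q (u i) (y i)
  exact Finset.prod_nonneg fun i _ => hQ (u i) (y i)

lemma chain_nonneg {β γ : Type*} [Fintype β] [Fintype γ]
    (Q : ℕ → Matrix β γ ℝ) (Φ : ℕ → Matrix γ β ℝ)
    (hQ : ∀ ℓ x y, 0 ≤ Q ℓ x y) (hΦ : ∀ ℓ x y, 0 ≤ Φ ℓ x y) :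
    ∀ n x y, 0 ≤ chain Q Φ n x y := by
  intro n
  induction n with
  | zero => exact hQ 0
  | succ n ih =>
    exact mul_nonneg_mat _ _ (mul_nonneg_mat _ _ ih (hΦ n)) (hQ (n+1))

lemma endToEnd_nonneg {A Qi Qo : Type*} [Fintype A] [Fintype Qi] [Fintype Qo]
    (L M N : ℕ) (F : Matrix (Fin M → A) (Fin N → Qi) ℝ) (Q : ℕ → Matrix Qi Qo ℝ)
    (Φ : ℕ → Matrix (Fin N → Qo) (Fin N → Qi) ℝ)
    (hF : ∀ x y, 0 ≤ F x y) (hQ : ∀ ℓ x y, 0 ≤ Q ℓ x y)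
    (hΦ : ∀ ℓ x y, 0 ≤ Φ ℓ x y) :
    ∀ x y, 0 ≤ endToEnd L M N F Q Φ x y := by
  unfold endToEnd
  exact mul_nonneg_mat _ _ hF
    (chain_nonneg _ _ (fun ℓ => tensorPow_nonneg N (Q ℓ) (hQ ℓ)) hΦ (L-1))

lemma replaceF {A Qi Qo : Type*} [Fintype A] [Fintype Qi] [Fintype Qo] [Nonempty Qi]
    (L M N : ℕ) (p : (Fin M → A) → ℝ) (hp : ∀ x, 0 ≤ p x)
    (F : Matrix (Fin M → A) (Fin N → Qi) ℝ) (hF : IsStoch F)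
    (Q : ℕ → Matrix Qi Qo ℝ) (hQ : ∀ ℓ x y, 0 ≤ Q ℓ x y)
    (Φ : ℕ → Matrix (Fin N → Qo) (Fin N → Qi) ℝ) (hΦ : ∀ ℓ x y, 0 ≤ Φ ℓ x y) :
    ∃ f : (Fin M → A) → (Fin N → Qi),
      mutualInfo p (endToEnd L M N F Q Φ)
        ≤ mutualInfo p (endToEnd L M N (det f) Q Φ) := by
  classical
  obtain ⟨hwnn, hw1⟩ := stoch_weights F hF
  set c : ((Fin M → A) → (Fin N → Qi)) → ℝ := fun f => ∏ x, F x (f x) with hc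
  have hE : endToEnd L M N F Q Φ = ∑ f, c f • endToEnd L M N (det f) Q Φ := by
    unfold endToEnd
    conv_lhs => rw [stoch_decomp F hF]
    rw [Matrix.sum_mul]
    exact Finset.sum_congr rfl fun f _ => Matrix.smul_mul _ _ _
  have hnn : ∀ (f : (Fin M → A) → (Fin N → Qi)) x y,
      0 ≤ endToEnd L M N (det f) Q Φ x y :=
    fun f => endToEnd_nonneg L M N _ Q Φ (fun x y => ((det_stoch f) x).1 y) hQ hΦ
  have hconv : mutualInfo p (endToEnd L M N F Q Φ)
      ≤ ∑ f, c f * mutualInfo p (endToEnd L M N (det f) Q Φ) := by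
    rw [hE]
    exact mutualInfo_convex p hp c hwnn _ hnn
  obtain ⟨f0, -, hf0⟩ := Finset.exists_max_image Finset.univ
    (fun f => mutualInfo p (endToEnd L M N (det f) Q Φ))
    ⟨Classical.arbitrary _, Finset.mem_univ _⟩
  refine ⟨f0, hconv.trans ?_⟩
  calc ∑ f, c f * mutualInfo p (endToEnd L M N (det f) Q Φ)
      ≤ ∑ f, c f * mutualInfo p (endToEnd L M N (det f0) Q Φ) :=
        Finset.sum_le_sum fun f _ =>
          mul_le_mul_of_nonneg_left (hf0 f (Finset.mem_univ f)) (hwnn f)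
    _ = mutualInfo p (endToEnd L M N (det f0) Q Φ) := by
        rw [← Finset.sum_mul, hw1, one_mul]

lemma replacePhi {A Qi Qo : Type*} [Fintype A] [Fintype Qi] [Fintype Qo] [Nonempty Qi]
    (L M N k : ℕ) (p : (Fin M → A) → ℝ) (hp : ∀ x, 0 ≤ p x)
    (F : Matrix (Fin M → A) (Fin N → Qi) ℝ) (hF : ∀ x y, 0 ≤ F x y)
    (Q : ℕ → Matrix Qi Qo ℝ) (hQ : ∀ ℓ x y, 0 ≤ Q ℓ x y)
    (Φ : ℕ → Matrix (Fin N → Qo) (Fin N → Qi) ℝ) (hΦ : ∀ ℓ, IsStoch (Φ ℓ)) :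
    ∃ g : (Fin N → Qo) → (Fin N → Qi),
      mutualInfo p (endToEnd L M N F Q Φ)
        ≤ mutualInfo p (endToEnd L M N F Q (Function.update Φ k (det g))) := by
  classical
  obtain ⟨hwnn, hw1⟩ := stoch_weights (Φ k) (hΦ k)
  set c : ((Fin N → Qo) → (Fin N → Qi)) → ℝ := fun g => ∏ y, Φ k y (g y) with hc
  have hupd : ∀ (g : (Fin N → Qo) → (Fin N → Qi)) ℓ x y,
      0 ≤ Function.update Φ k (det g) ℓ x y := by
    intro g ℓ x y
    by_cases h : ℓ = k
    · subst h; rw [Function.update_self]; exact ((det_stoch g) x).1 y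
    · rw [Function.update_of_ne h]; exact ((hΦ ℓ) x).1 y
  have hE : endToEnd L M N F Q Φ
      = ∑ g, c g • endToEnd L M N F Q (Function.update Φ k (det g)) := by
    unfold endToEnd
    rw [chain_update_sum (fun ℓ => tensorPow N (Q ℓ)) Φ k c hw1 (fun g => det g)
      (stoch_decomp (Φ k) (hΦ k)) (L-1)]
    rw [Matrix.mul_sum]
    exact Finset.sum_congr rfl fun g _ => Matrix.mul_smul _ _ _
  have hnn : ∀ (g : (Fin N → Qo) → (Fin N → Qi)) x y,
      0 ≤ endToEnd L M N F Q (Function.update Φ k (det g)) x y :=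
    fun g => endToEnd_nonneg L M N _ Q _ hF hQ (hupd g)
  have hconv : mutualInfo p (endToEnd L M N F Q Φ)
      ≤ ∑ g, c g * mutualInfo p (endToEnd L M N F Q (Function.update Φ k (det g))) := by
    rw [hE]
    exact mutualInfo_convex p hp c hwnn _ hnn
  obtain ⟨g0, -, hg0⟩ := Finset.exists_max_image Finset.univ
    (fun g => mutualInfo p (endToEnd L M N F Q (Function.update Φ k (det g))))
    ⟨Classical.arbitrary _, Finset.mem_univ _⟩
  refine ⟨g0, hconv.trans ?_⟩
  calc ∑ g, c g * mutualInfo p (endToEnd L M N F Q (Function.update Φ k (det g)))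
      ≤ ∑ g, c g * mutualInfo p (endToEnd L M N F Q (Function.update Φ k (det g0))) :=
        Finset.sum_le_sum fun g _ =>
          mul_le_mul_of_nonneg_left (hg0 g (Finset.mem_univ g)) (hwnn g)
    _ = _ := by rw [← Finset.sum_mul, hw1, one_mul]

lemma exists_p_max {α β : Type*} [Fintype α] [Fintype β] [Nonempty α]
    (W : Matrix α β ℝ) (hW : ∀ x y, 0 ≤ W x y) :
    ∃ p, IsDist p ∧ ∀ q, IsDist q → mutualInfo q W ≤ mutualInfo p W := by
  classical
  set g : (α → ℝ) → ℝ := fun p =>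
    (∑ x, p x * (∑ y, W x y * Real.logb 2 (W x y)))
      - ∑ y, (∑ x, p x * W x y) * Real.logb 2 (∑ x, p x * W x y) with hgdef
  have hrep : ∀ p : α → ℝ, (∀ x, 0 ≤ p x) → mutualInfo p W = g p := by
    intro p hp
    unfold mutualInfo
    have key : ∀ x y, p x * W x y * Real.logb 2 (W x y / ∑ x', p x' * W x' y)
        = p x * (W x y * Real.logb 2 (W x y))
          - p x * W x y * Real.logb 2 (∑ x', p x' * W x' y) := by
      intro x y
      by_cases hW0 : W x y = 0
      · simp [hW0]
      by_cases ht : (∑ x', p x' * W x' y) = 0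
      · have hx0 : p x * W x y = 0 :=
          (Finset.sum_eq_zero_iff_of_nonneg
            (fun x' _ => mul_nonneg (hp x') (hW x' y))).mp ht x (Finset.mem_univ x)
        have hp0 : p x = 0 := by
          rcases mul_eq_zero.mp hx0 with h | h
          · exact h
          · exact absurd h hW0
        simp [hp0]
      · rw [Real.logb_div hW0 ht]; ring
    rw [Finset.sum_congr rfl fun x _ => Finset.sum_congr rfl fun y _ => key x y]
    simp only [Finset.sum_sub_distrib, ← Finset.mul_sum]
    congr 1
    rw [Finset.sum_comm]
    exact Finset.sum_congr rfl fun y _ => by rw [← Finset.sum_mul]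
  have hcont : Continuous g := by
    apply Continuous.sub
    · exact continuous_finset_sum _ fun x _ => (continuous_apply x).mul continuous_const
    · apply continuous_finset_sum
      intro y _
      have ht : Continuous fun p : α → ℝ => ∑ x, p x * W x y :=
        continuous_finset_sum _ fun x _ => (continuous_apply x).mul continuous_const
      have hφ : Continuous fun s : ℝ => s * Real.logb 2 s := by
        have : (fun s : ℝ => s * Real.logb 2 s)
            = fun s : ℝ => (s * Real.log s) / Real.log 2 := by
          funext s; simp only [Real.logb]; rw [mul_div_assoc]
        rw [this]
        exact Real.continuous_mul_log.div_const _
      exact hφ.comp ht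
  have hclosed : IsClosed {p : α → ℝ | IsDist p} := by
    have h1 : IsClosed {p : α → ℝ | ∀ x, 0 ≤ p x} := by
      have : {p : α → ℝ | ∀ x, 0 ≤ p x} = ⋂ x, {p | 0 ≤ p x} := by ext p; simp [Set.mem_iInter]
      rw [this]
      exact isClosed_iInter fun x => isClosed_le continuous_const (continuous_apply x)
    have h2 : IsClosed {p : α → ℝ | ∑ x, p x = 1} :=
      isClosed_eq (continuous_finset_sum _ fun x _ => continuous_apply x) continuous_const
    have : {p : α → ℝ | IsDist p} = {p | ∀ x, 0 ≤ p x} ∩ {p | ∑ x, p x = 1} := rfl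
    rw [this]; exact h1.inter h2
  have hsub : {p : α → ℝ | IsDist p} ⊆ Set.univ.pi (fun _ : α => Set.Icc (0:ℝ) 1) := by
    intro p hp x _
    refine ⟨hp.1 x, ?_⟩
    rw [← hp.2]
    exact Finset.single_le_sum (fun i _ => hp.1 i) (Finset.mem_univ x)
  have hscomp : IsCompact {p : α → ℝ | IsDist p} :=
    (isCompact_univ_pi fun _ => isCompact_Icc).of_isClosed_subset hclosed hsub
  have hne : {p : α → ℝ | IsDist p}.Nonempty := by
    refine ⟨fun _ => (Fintype.card α : ℝ)⁻¹, ⟨fun _ => ?_, ?_⟩⟩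
    · positivity
    · rw [Finset.sum_const, Finset.card_univ, nsmul_eq_mul]
      have hcard : (0:ℝ) < Fintype.card α := by exact_mod_cast Fintype.card_pos
      field_simp
  obtain ⟨p0, hp0, hmax⟩ := hscomp.exists_isMaxOn hne hcont.continuousOn
  refine ⟨p0, hp0, fun q hq => ?_⟩
  rw [hrep q hq.1, hrep p0 hp0.1]
  exact hmax hq

noncomputable def PhiOf {Qi Qo : Type*} [Fintype Qi] [Fintype Qo] (L N : ℕ)
    (x₀ : Fin N → Qi) (G : Fin (L-1) → ((Fin N → Qo) → (Fin N → Qi))) :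
    ℕ → Matrix (Fin N → Qo) (Fin N → Qi) ℝ :=
  fun ℓ => if h : ℓ < L - 1 then det (G ⟨ℓ, h⟩) else det (fun _ => x₀)

lemma PhiOf_stoch {Qi Qo : Type*} [Fintype Qi] [Fintype Qo] (L N : ℕ)
    (x₀ : Fin N → Qi) (G : Fin (L-1) → ((Fin N → Qo) → (Fin N → Qi))) :
    ∀ ℓ, IsStoch (PhiOf L N x₀ G ℓ) := by
  intro ℓ; unfold PhiOf; split <;> exact det_stoch _

lemma PhiOf_zero_one {Qi Qo : Type*} [Fintype Qi] [Fintype Qo] (L N : ℕ)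
    (x₀ : Fin N → Qi) (G : Fin (L-1) → ((Fin N → Qo) → (Fin N → Qi))) :
    ∀ ℓ y u, PhiOf L N x₀ G ℓ y u = 0 ∨ PhiOf L N x₀ G ℓ y u = 1 := by
  intro ℓ; unfold PhiOf; split <;> exact det_zero_one _

lemma makeDet {A Qi Qo : Type*} [Fintype A] [Fintype Qi] [Fintype Qo]
    [Nonempty Qi] [Nonempty Qo]
    (L M N : ℕ) (p : (Fin M → A) → ℝ) (hp : ∀ x, 0 ≤ p x)
    (F : Matrix (Fin M → A) (Fin N → Qi) ℝ) (hF : ∀ x y, 0 ≤ F x y)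
    (Q : ℕ → Matrix Qi Qo ℝ) (hQ : ∀ ℓ x y, 0 ≤ Q ℓ x y) :
    ∀ (k : ℕ) (Φ : ℕ → Matrix (Fin N → Qo) (Fin N → Qi) ℝ), (∀ ℓ, IsStoch (Φ ℓ)) →
    ∃ (g : ℕ → ((Fin N → Qo) → (Fin N → Qi)))
      (Ψ : ℕ → Matrix (Fin N → Qo) (Fin N → Qi) ℝ),
      (∀ ℓ, IsStoch (Ψ ℓ)) ∧ (∀ ℓ, ℓ < k → Ψ ℓ = det (g ℓ)) ∧ (∀ ℓ, k ≤ ℓ → Ψ ℓ = Φ ℓ) ∧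
      mutualInfo p (endToEnd L M N F Q Φ) ≤ mutualInfo p (endToEnd L M N F Q Ψ) := by
  classical
  intro k
  induction k with
  | zero =>
    intro Φ hΦ
    exact ⟨fun _ _ => Classical.arbitrary _, Φ, hΦ, fun ℓ h => absurd h (Nat.not_lt_zero ℓ),
      fun ℓ _ => rfl, le_refl _⟩
  | succ k ih =>
    intro Φ hΦ
    obtain ⟨g, Ψ, hs, hlow, hhigh, hle⟩ := ih Φ hΦ
    obtain ⟨g0, h2⟩ := replacePhi L M N k p hp F hF Q hQ Ψ hs
    refine ⟨Function.update g k g0, Function.update Ψ k (det g0), ?_, ?_, ?_, ?_⟩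
    · intro ℓ
      by_cases h : ℓ = k
      · subst h; rw [Function.update_self]; exact det_stoch g0
      · rw [Function.update_of_ne h]; exact hs ℓ
    · intro ℓ hℓ
      by_cases h : ℓ = k
      · subst h; rw [Function.update_self, Function.update_self]
      · rw [Function.update_of_ne h, Function.update_of_ne h]
        exact hlow ℓ (lt_of_le_of_ne (Nat.lt_succ_iff.mp hℓ) h)
    · intro ℓ hℓ
      have h : ℓ ≠ k := fun e => by omega
      rw [Function.update_of_ne h]
      exact hhigh ℓ (by omega)
    · exact hle.trans h2


/-- For any line network of length `L` formed by DMCs `Q₁,…,Q_L` and any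
batch size `M`, batch alphabet `A`, and inner block-length `N`, the batched-code capacity
`C_L(M,N) = (1/N) max_{F,Φ,p} I(p, W_L)` is attained by deterministic (0–1) recoding
matrices `F` and `Φ₁,…,Φ_{L-1}`. -/
theorem stmt0 {A Qi Qo : Type} [Fintype A] [Fintype Qi] [Fintype Qo]
    [Nonempty A] [Nonempty Qi] [Nonempty Qo]
    (L M N : ℕ) (hL : 0 < L) (hM : 0 < M) (hN : 0 < N)
    (Q : ℕ → Matrix Qi Qo ℝ) (hQ : ∀ ℓ, IsStoch (Q ℓ)) :
    ∃ (F : Matrix (Fin M → A) (Fin N → Qi) ℝ)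
      (Φ : ℕ → Matrix (Fin N → Qo) (Fin N → Qi) ℝ)
      (p : (Fin M → A) → ℝ),
      IsStoch F ∧ (∀ ℓ, IsStoch (Φ ℓ)) ∧ IsDist p ∧
      (∀ x u, F x u = 0 ∨ F x u = 1) ∧
      (∀ ℓ y u, Φ ℓ y u = 0 ∨ Φ ℓ y u = 1) ∧
      (∀ (F' : Matrix (Fin M → A) (Fin N → Qi) ℝ)
         (Φ' : ℕ → Matrix (Fin N → Qo) (Fin N → Qi) ℝ)
         (p' : (Fin M → A) → ℝ),
         IsStoch F' → (∀ ℓ, IsStoch (Φ' ℓ)) → IsDist p' →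
         (1 / (N : ℝ)) * mutualInfo p' (endToEnd L M N F' Q Φ')
           ≤ (1 / (N : ℝ)) * mutualInfo p (endToEnd L M N F Q Φ)) := by
  classical
  have hQnn : ∀ ℓ (x : Qi) (y : Qo), 0 ≤ Q ℓ x y := fun ℓ x y => ((hQ ℓ) x).1 y
  set x₀ : Fin N → Qi := Classical.arbitrary _ with hx₀
  set T := (((Fin M → A) → (Fin N → Qi)) × (Fin (L-1) → ((Fin N → Qo) → (Fin N → Qi))))
    with hT
  haveI : Nonempty T := ⟨⟨fun _ => x₀, fun _ _ => x₀⟩⟩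
  set Wof : T → Matrix (Fin M → A) (Fin N → Qo) ℝ :=
    fun d => endToEnd L M N (det d.1) Q (PhiOf L N x₀ d.2) with hWof
  have hWofnn : ∀ d : T, ∀ x y, 0 ≤ Wof d x y := fun d =>
    endToEnd_nonneg L M N _ Q _ (fun x y => ((det_stoch d.1) x).1 y) hQnn
      (fun ℓ x y => ((PhiOf_stoch L N x₀ d.2 ℓ) x).1 y)
  choose pd hpdDist hpdMax using fun d : T => exists_p_max (Wof d) (hWofnn d)
  obtain ⟨dstar, -, hdstar⟩ := Finset.exists_max_image Finset.univ
    (fun d : T => mutualInfo (pd d) (Wof d)) ⟨Classical.arbitrary T, Finset.mem_univ _⟩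
  refine ⟨det dstar.1, PhiOf L N x₀ dstar.2, pd dstar, det_stoch _,
    PhiOf_stoch L N x₀ dstar.2, hpdDist dstar, det_zero_one _,
    PhiOf_zero_one L N x₀ dstar.2, ?_⟩
  intro F' Φ' p' hF' hΦ' hp'
  have hNnn : (0:ℝ) ≤ 1 / (N:ℝ) := by positivity
  apply mul_le_mul_of_nonneg_left _ hNnn
  -- replace F'
  obtain ⟨f, h1⟩ := replaceF L M N p' hp'.1 F' hF' Q hQnn Φ'
    (fun ℓ x y => ((hΦ' ℓ) x).1 y)
  -- replace Φ'
  obtain ⟨g, Ψ, hs, hlow, -, h2⟩ := makeDet L M N p' hp'.1 (det f)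
    (fun x y => ((det_stoch f) x).1 y) Q hQnn (L-1) Φ' hΦ'
  -- the resulting tuple
  set G : Fin (L-1) → ((Fin N → Qo) → (Fin N → Qi)) := fun i => g i with hG
  have hΨ : endToEnd L M N (det f) Q Ψ = Wof (f, G) := by
    show (det f) * chain (fun ℓ => tensorPow N (Q ℓ)) Ψ (L-1) = _
    rw [chain_congr (fun ℓ => tensorPow N (Q ℓ)) Ψ (PhiOf L N x₀ G) (L-1)
      (fun ℓ hℓ => by rw [hlow ℓ hℓ]; unfold PhiOf; rw [dif_pos hℓ])]
    rfl
  calc mutualInfo p' (endToEnd L M N F' Q Φ')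
      ≤ mutualInfo p' (endToEnd L M N (det f) Q Φ') := h1
    _ ≤ mutualInfo p' (endToEnd L M N (det f) Q Ψ) := h2
    _ = mutualInfo p' (Wof (f, G)) := by rw [hΨ]
    _ ≤ mutualInfo (pd (f, G)) (Wof (f, G)) := hpdMax (f, G) p' hp'
    _ ≤ mutualInfo (pd dstar) (Wof dstar) := hdstar (f, G) (Finset.mem_univ _)
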